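/- Let A ∈ ℝ^{m×n} be a matrix, let b = Ax + z with ‖Aᵀz‖_∞ ≤ ε, let λ > 0, and let x^♯ be a minimizer of u ↦ ‖u‖₁ + (1/(2λ))‖Aᵀ(b − Au)‖_∞². Set h = x^♯ − x. Then for every subset E ⊂ {1,…,n}, ‖AᵀAh‖_∞² − 2ε‖AᵀAh‖_∞ ≤ 2λ(‖h_E‖₁ − ‖h_{E^c}‖₁ + 2‖x_{E^c}‖₁). -/
import Mathlib


noncomputable def l2norm {ι : Type*} [Fintype ι] (v : ι → ℝ) : ℝ :=
  Real.sqrt (∑ i, (v i) ^ 2)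

noncomputable def l1norm {ι : Type*} [Fintype ι] (v : ι → ℝ) : ℝ :=
  ∑ i, |v i|

noncomputable def linfnorm {ι : Type*} [Fintype ι] (v : ι → ℝ) : ℝ :=
  ⨆ i, |v i|

/-- The mutual coherence of a matrix: the largest absolute inner product
between two distinct columns. -/
noncomputable def mutualCoherence {m n : ℕ} (A : Matrix (Fin m) (Fin n) ℝ) : ℝ :=
  ⨆ p : {p : Fin n × Fin n // p.1 ≠ p.2}, |∑ r, A r p.1.1 * A r p.1.2|

/-- `restrict v E` agrees with `v` on `E` and vanishes outside of `E`. -/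
def restrict {n : ℕ} (v : Fin n → ℝ) (E : Finset (Fin n)) : Fin n → ℝ :=
  fun i => if i ∈ E then v i else 0

/-- A vector is `k`-sparse if it has at most `k` nonzero entries. -/
def sparse {n : ℕ} (k : ℕ) (v : Fin n → ℝ) : Prop :=
  (Finset.univ.filter fun i => v i ≠ 0).card ≤ k

noncomputable def alpha1 (k : ℕ) (μ : ℝ) : ℝ :=
  Real.sqrt (1 + ((k : ℝ) - 1) * μ) / (1 - ((k : ℝ) - 1) * μ)

noncomputable def alpha2 (k : ℕ) (μ : ℝ) : ℝ :=
  Real.sqrt k * μ / (1 - ((k : ℝ) - 1) * μ)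

noncomputable def fk (k : ℕ) (t : ℝ) : ℝ :=
  (k : ℝ) * t ^ 2 + 3 * Real.sqrt k * t + 3

noncomputable def gk (k : ℕ) (t : ℝ) : ℝ :=
  2 * (k : ℝ) * t ^ 2 + 4 * Real.sqrt k * t + 1

lemma linf_nonneg {ι : Type*} [Fintype ι] (v : ι → ℝ) : 0 ≤ linfnorm v :=
  Real.iSup_nonneg fun _ => abs_nonneg _

lemma abs_le_linf {ι : Type*} [Fintype ι] (v : ι → ℝ) (i : ι) : |v i| ≤ linfnorm v := by
  unfold linfnorm
  exact le_ciSup (f := fun i => |v i|) (Set.Finite.bddAbove (Set.finite_range _)) i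

lemma linf_sub_le {ι : Type*} [Fintype ι] (u v : ι → ℝ) :
    linfnorm (u - v) ≤ linfnorm u + linfnorm v := by
  refine Real.iSup_le (fun i => ?_) (add_nonneg (linf_nonneg u) (linf_nonneg v))
  calc |(u - v) i| = |u i - v i| := rfl
    _ ≤ |u i| + |v i| := abs_sub _ _
    _ ≤ _ := add_le_add (abs_le_linf u i) (abs_le_linf v i)

theorem stmt_12 {m n : ℕ} (A : Matrix (Fin m) (Fin n) ℝ)
    (x : Fin n → ℝ) (z : Fin m → ℝ) (b : Fin m → ℝ) (hb : b = A.mulVec x + z)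
    (ε lam : ℝ) (hz : linfnorm (A.transpose.mulVec z) ≤ ε) (hlam : 0 < lam)
    (xs : Fin n → ℝ)
    (hmin : ∀ u : Fin n → ℝ,
      l1norm xs + 1 / (2 * lam) * linfnorm (A.transpose.mulVec (b - A.mulVec xs)) ^ 2 ≤
        l1norm u + 1 / (2 * lam) * linfnorm (A.transpose.mulVec (b - A.mulVec u)) ^ 2)
    (E : Finset (Fin n)) :
    linfnorm (A.transpose.mulVec (A.mulVec (xs - x))) ^ 2
        - 2 * ε * linfnorm (A.transpose.mulVec (A.mulVec (xs - x))) ≤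
      2 * lam * (l1norm (restrict (xs - x) E) - l1norm (restrict (xs - x) Eᶜ)
        + 2 * l1norm (restrict x Eᶜ)) := by

  set t := linfnorm (A.transpose.mulVec (A.mulVec (xs - x))) with ht
  set e' := linfnorm (A.transpose.mulVec z) with he'
  set s := linfnorm (A.transpose.mulVec (b - A.mulVec xs)) with hs
  have hw : b - A.mulVec xs = z - A.mulVec (xs - x) := by
    rw [hb, Matrix.mulVec_sub]; abel
  have key : A.transpose.mulVec (b - A.mulVec xs)
      = A.transpose.mulVec z - A.transpose.mulVec (A.mulVec (xs - x)) := by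
    rw [hw, Matrix.mulVec_sub]
  have ht1 : t ≤ s + e' := by
    have hid : A.transpose.mulVec (A.mulVec (xs - x))
        = A.transpose.mulVec z - A.transpose.mulVec (b - A.mulVec xs) := by
      rw [key]; abel
    rw [ht, hid]
    have := linf_sub_le (A.transpose.mulVec z) (A.transpose.mulVec (b - A.mulVec xs))
    linarith
  have ht2 : e' ≤ s + t := by
    have hid : A.transpose.mulVec z
        = A.transpose.mulVec (b - A.mulVec xs) - (- A.transpose.mulVec (A.mulVec (xs - x))) := by
      rw [key]; abel
    rw [he', hid]
    have h1 := linf_sub_le (A.transpose.mulVec (b - A.mulVec xs))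
      (- A.transpose.mulVec (A.mulVec (xs - x)))
    have h2 : linfnorm (- A.transpose.mulVec (A.mulVec (xs - x))) = t := by
      rw [ht]; unfold linfnorm; simp
    linarith
  have htn : 0 ≤ t := linf_nonneg _
  have hsn : 0 ≤ s := linf_nonneg _
  have hen : 0 ≤ e' := linf_nonneg _
  have hsq : (t - e') ^ 2 ≤ s ^ 2 := sq_le_sq' (by linarith) (by linarith)
  -- minimality at u = x
  have hbx : A.transpose.mulVec (b - A.mulVec x) = A.transpose.mulVec z := by
    have hxz : A.mulVec x + z - A.mulVec x = z := by abel
    rw [hb, hxz]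
  have hminx := hmin x
  rw [hbx] at hminx
  have h2l : (0:ℝ) < 2 * lam := by linarith
  have hmul : s ^ 2 - e' ^ 2 ≤ 2 * lam * (l1norm x - l1norm xs) := by
    have h3 : 1 / (2 * lam) * (s ^ 2 - e' ^ 2) ≤ l1norm x - l1norm xs := by linarith
    have h4 := mul_le_mul_of_nonneg_left h3 (le_of_lt h2l)
    have h5 : 2 * lam * (1 / (2 * lam) * (s ^ 2 - e' ^ 2)) = s ^ 2 - e' ^ 2 := by
      field_simp
    linarith
  -- cone bound
  have hcone : l1norm x - l1norm xs ≤
      l1norm (restrict (xs - x) E) - l1norm (restrict (xs - x) Eᶜ)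
        + 2 * l1norm (restrict x Eᶜ) := by
    unfold l1norm restrict
    rw [← Finset.sum_sub_distrib]
    rw [Finset.mul_sum]
    rw [show (∑ i, |if i ∈ E then (xs - x) i else 0|)
        - (∑ i, |if i ∈ Eᶜ then (xs - x) i else 0|)
        + (∑ i, 2 * |if i ∈ Eᶜ then x i else 0|)
      = ∑ i, ((|if i ∈ E then (xs - x) i else 0|)
        - (|if i ∈ Eᶜ then (xs - x) i else 0|)
        + 2 * |if i ∈ Eᶜ then x i else 0|) by
      rw [Finset.sum_add_distrib, Finset.sum_sub_distrib]]
    refine Finset.sum_le_sum fun i _ => ?_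
    by_cases hi : i ∈ E
    · have hic : i ∉ Eᶜ := by simp [hi]
      rw [if_pos hi, if_neg hic, if_neg hic, abs_zero]
      have h1 : |x i| - |xs i| ≤ |x i - xs i| := abs_sub_abs_le_abs_sub _ _
      have h2 : |x i - xs i| = |(xs - x) i| := by
        rw [abs_sub_comm]; rfl
      linarith
    · have hic : i ∈ Eᶜ := Finset.mem_compl.mpr hi
      rw [if_neg hi, if_pos hic, if_pos hic, abs_zero]
      have h2 : |(xs - x) i| ≤ |xs i| + |x i| := by
        have : (xs - x) i = xs i - x i := rfl
        rw [this]
        exact abs_sub _ _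
      linarith
  have het : e' * t ≤ ε * t := mul_le_mul_of_nonneg_right (le_trans (le_of_eq rfl) hz) htn
  have hfin : 2 * lam * (l1norm x - l1norm xs) ≤ 2 * lam * (l1norm (restrict (xs - x) E)
      - l1norm (restrict (xs - x) Eᶜ) + 2 * l1norm (restrict x Eᶜ)) :=
    mul_le_mul_of_nonneg_left hcone (le_of_lt h2l)
  nlinarith [hsq, hmul, het, hfin]
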